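/- Let Y be a Hopf coquasigroup over a field F and let D, B be Hopf coquasigroups whose antipodes λ_D and λ_B are bijective, equipped with surjective Hopf coquasigroup morphisms p_D : Y → D and p_B : Y → B such that Y cofactorizes as Y = D•B. Let Ω = v_Y∘u_Y⁻¹, which is an a-monoidal codistributive law of D over B. Then u_Y is an isomorphism of Hopf coquasigroups from Y to the wreath coproduct D⊗_Ω B, i.e. u_Y is bijective and preserves unit, product, counit and coproduct of the wreath coproduct structure. -/

import Mathlib

open TensorProduct LinearMap

noncomputable section

universe u

/-- A Hopf quasigroup structure on an `F`-module `H`. -/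
structure HopfQG (F : Type u) [Field F] (H : Type u) [AddCommGroup H] [Module F H] where
  eta : F →ₗ[F] H
  mu : H ⊗[F] H →ₗ[F] H
  eps : H →ₗ[F] F
  delta : H →ₗ[F] H ⊗[F] H
  lam : H →ₗ[F] H
  mul_one : mu ∘ₗ lTensor H eta ∘ₗ (TensorProduct.rid F H).symm.toLinearMap = LinearMap.id
  one_mul : mu ∘ₗ rTensor H eta ∘ₗ (TensorProduct.lid F H).symm.toLinearMap = LinearMap.id
  counit_left : (TensorProduct.lid F H).toLinearMap ∘ₗ rTensor H eps ∘ₗ delta = LinearMap.id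
  counit_right : (TensorProduct.rid F H).toLinearMap ∘ₗ lTensor H eps ∘ₗ delta = LinearMap.id
  coassoc : (TensorProduct.assoc F H H H).toLinearMap ∘ₗ rTensor H delta ∘ₗ delta
      = lTensor H delta ∘ₗ delta
  eps_eta : eps ∘ₗ eta = LinearMap.id
  eps_mu : eps ∘ₗ mu = (TensorProduct.lid F F).toLinearMap ∘ₗ TensorProduct.map eps eps
  delta_eta : delta ∘ₗ eta
      = TensorProduct.map eta eta ∘ₗ (TensorProduct.lid F F).symm.toLinearMap
  delta_mu : delta ∘ₗ mu
      = TensorProduct.map mu mu ∘ₗ (TensorProduct.tensorTensorTensorComm F H H H H).toLinearMap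
          ∘ₗ TensorProduct.map delta delta
  antipode_l1 : mu ∘ₗ TensorProduct.map lam mu ∘ₗ (TensorProduct.assoc F H H H).toLinearMap
        ∘ₗ rTensor H delta
      = (TensorProduct.lid F H).toLinearMap ∘ₗ rTensor H eps
  antipode_l2 : mu ∘ₗ lTensor H mu ∘ₗ lTensor H (rTensor H lam)
        ∘ₗ (TensorProduct.assoc F H H H).toLinearMap ∘ₗ rTensor H delta
      = (TensorProduct.lid F H).toLinearMap ∘ₗ rTensor H eps
  antipode_r1 : mu ∘ₗ rTensor H mu ∘ₗ (TensorProduct.assoc F H H H).symm.toLinearMap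
        ∘ₗ lTensor H (rTensor H lam) ∘ₗ lTensor H delta
      = (TensorProduct.rid F H).toLinearMap ∘ₗ lTensor H eps
  antipode_r2 : mu ∘ₗ TensorProduct.map mu lam ∘ₗ (TensorProduct.assoc F H H H).symm.toLinearMap
        ∘ₗ lTensor H delta
      = (TensorProduct.rid F H).toLinearMap ∘ₗ lTensor H eps

section QGDefs

variable (F : Type u) [Field F]
variable {H : Type u} [AddCommGroup H] [Module F H]
variable {A : Type u} [AddCommGroup A] [Module F A]
variable {X : Type u} [AddCommGroup X] [Module F X]

/-- The tensor-product coproduct `δ_{H⊗A} = (H⊗c_{H,A}⊗A)∘(δ_H⊗δ_A)`. -/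
def tensorDelta (dH : H →ₗ[F] H ⊗[F] H) (dA : A →ₗ[F] A ⊗[F] A) :
    H ⊗[F] A →ₗ[F] (H ⊗[F] A) ⊗[F] (H ⊗[F] A) :=
  (TensorProduct.tensorTensorTensorComm F H H A A).toLinearMap ∘ₗ TensorProduct.map dH dA

/-- The tensor-product counit `ε_H⊗ε_A`. -/
def tensorEps (eH : H →ₗ[F] F) (eA : A →ₗ[F] F) : H ⊗[F] A →ₗ[F] F :=
  (TensorProduct.lid F F).toLinearMap ∘ₗ TensorProduct.map eH eA

/-- The tensor-product unit `η_H⊗η_A`. -/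
def tensorEta (uH : F →ₗ[F] H) (uA : F →ₗ[F] A) : F →ₗ[F] H ⊗[F] A :=
  TensorProduct.map uH uA ∘ₗ (TensorProduct.lid F F).symm.toLinearMap

/-- The tensor-product multiplication `(μ_H⊗μ_A)∘(H⊗c_{A,H}⊗A)`. -/
def tensorMu (mH : H ⊗[F] H →ₗ[F] H) (mA : A ⊗[F] A →ₗ[F] A) :
    (H ⊗[F] A) ⊗[F] (H ⊗[F] A) →ₗ[F] H ⊗[F] A :=
  TensorProduct.map mH mA ∘ₗ (TensorProduct.tensorTensorTensorComm F H A H A).toLinearMap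

/-- `Ψ : H⊗A → A⊗H` is a distributive law of the Hopf quasigroup `H` over `A`. -/
def IsDistLaw (QH : HopfQG F H) (QA : HopfQG F A) (Ψ : H ⊗[F] A →ₗ[F] A ⊗[F] H) : Prop :=
  (Ψ ∘ₗ lTensor H QA.mu ∘ₗ TensorProduct.map QH.lam (rTensor A QA.lam)
      = rTensor H QA.mu ∘ₗ (TensorProduct.assoc F A A H).symm.toLinearMap
        ∘ₗ lTensor A Ψ ∘ₗ (TensorProduct.assoc F A H A).toLinearMap
        ∘ₗ rTensor A Ψ ∘ₗ (TensorProduct.assoc F H A A).symm.toLinearMap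
        ∘ₗ TensorProduct.map QH.lam (rTensor A QA.lam))
  ∧ (Ψ ∘ₗ rTensor A QH.mu ∘ₗ TensorProduct.map (lTensor H QH.lam) QA.lam
      = lTensor A QH.mu ∘ₗ (TensorProduct.assoc F A H H).toLinearMap
        ∘ₗ rTensor H Ψ ∘ₗ (TensorProduct.assoc F H A H).symm.toLinearMap
        ∘ₗ lTensor H Ψ ∘ₗ (TensorProduct.assoc F H H A).toLinearMap
        ∘ₗ TensorProduct.map (lTensor H QH.lam) QA.lam)
  ∧ (Ψ ∘ₗ lTensor H QA.eta ∘ₗ (TensorProduct.rid F H).symm.toLinearMap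
      = rTensor H QA.eta ∘ₗ (TensorProduct.lid F H).symm.toLinearMap)
  ∧ (Ψ ∘ₗ rTensor A QH.eta ∘ₗ (TensorProduct.lid F A).symm.toLinearMap
      = lTensor A QH.eta ∘ₗ (TensorProduct.rid F A).symm.toLinearMap)

/-- `Ψ` is a comonoidal distributive law of `H` over `A`. -/
def IsComonoidalDL (QH : HopfQG F H) (QA : HopfQG F A) (Ψ : H ⊗[F] A →ₗ[F] A ⊗[F] H) : Prop :=
  IsDistLaw F QH QA Ψ
  ∧ (tensorDelta F QA.delta QH.delta ∘ₗ Ψ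
      = TensorProduct.map Ψ Ψ ∘ₗ tensorDelta F QH.delta QA.delta)
  ∧ (tensorEps F QA.eps QH.eps ∘ₗ Ψ = tensorEps F QH.eps QA.eps)

/-- `Ψ` is an a-comonoidal distributive law of `H` over `A`. -/
def IsAComonoidalDL (QH : HopfQG F H) (QA : HopfQG F A) (Ψ : H ⊗[F] A →ₗ[F] A ⊗[F] H) : Prop :=
  IsComonoidalDL F QH QA Ψ
  ∧ (lTensor A QH.mu ∘ₗ (TensorProduct.assoc F A H H).toLinearMap
        ∘ₗ TensorProduct.map Ψ QH.mu
        ∘ₗ (TensorProduct.assoc F H A (H ⊗[F] H)).symm.toLinearMap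
        ∘ₗ lTensor H (TensorProduct.assoc F A H H).toLinearMap
        ∘ₗ lTensor H (rTensor H Ψ)
        ∘ₗ lTensor H (TensorProduct.assoc F H A H).symm.toLinearMap
        ∘ₗ (TensorProduct.assoc F H H (A ⊗[F] H)).toLinearMap
        ∘ₗ rTensor (A ⊗[F] H) (rTensor H QH.lam ∘ₗ QH.delta)
      = (TensorProduct.lid F (A ⊗[F] H)).toLinearMap ∘ₗ rTensor (A ⊗[F] H) QH.eps)
  ∧ (lTensor A QH.mu ∘ₗ (TensorProduct.assoc F A H H).toLinearMap
        ∘ₗ TensorProduct.map Ψ QH.mu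
        ∘ₗ (TensorProduct.assoc F H A (H ⊗[F] H)).symm.toLinearMap
        ∘ₗ lTensor H (TensorProduct.assoc F A H H).toLinearMap
        ∘ₗ lTensor H (rTensor H Ψ)
        ∘ₗ lTensor H (TensorProduct.assoc F H A H).symm.toLinearMap
        ∘ₗ (TensorProduct.assoc F H H (A ⊗[F] H)).toLinearMap
        ∘ₗ rTensor (A ⊗[F] H) (lTensor H QH.lam ∘ₗ QH.delta)
      = (TensorProduct.lid F (A ⊗[F] H)).toLinearMap ∘ₗ rTensor (A ⊗[F] H) QH.eps)
  ∧ (rTensor H QA.mu ∘ₗ (TensorProduct.assoc F A A H).symm.toLinearMap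
        ∘ₗ TensorProduct.map QA.mu Ψ
        ∘ₗ (TensorProduct.assoc F A A (H ⊗[F] A)).symm.toLinearMap
        ∘ₗ lTensor A (TensorProduct.assoc F A H A).toLinearMap
        ∘ₗ lTensor A (rTensor A Ψ)
        ∘ₗ lTensor A (TensorProduct.assoc F H A A).symm.toLinearMap
        ∘ₗ (TensorProduct.assoc F A H (A ⊗[F] A)).toLinearMap
        ∘ₗ lTensor (A ⊗[F] H) (rTensor A QA.lam ∘ₗ QA.delta)
      = (TensorProduct.rid F (A ⊗[F] H)).toLinearMap ∘ₗ lTensor (A ⊗[F] H) QA.eps)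
  ∧ (rTensor H QA.mu ∘ₗ (TensorProduct.assoc F A A H).symm.toLinearMap
        ∘ₗ TensorProduct.map QA.mu Ψ
        ∘ₗ (TensorProduct.assoc F A A (H ⊗[F] A)).symm.toLinearMap
        ∘ₗ lTensor A (TensorProduct.assoc F A H A).toLinearMap
        ∘ₗ lTensor A (rTensor A Ψ)
        ∘ₗ lTensor A (TensorProduct.assoc F H A A).symm.toLinearMap
        ∘ₗ (TensorProduct.assoc F A H (A ⊗[F] A)).toLinearMap
        ∘ₗ lTensor (A ⊗[F] H) (lTensor A QA.lam ∘ₗ QA.delta)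
      = (TensorProduct.rid F (A ⊗[F] H)).toLinearMap ∘ₗ lTensor (A ⊗[F] H) QA.eps)

/-- The wreath product multiplication `(μ_A⊗μ_H)∘(A⊗Ψ⊗H)` on `A⊗H`. -/
def wreathMul (QA : HopfQG F A) (QH : HopfQG F H) (Ψ : H ⊗[F] A →ₗ[F] A ⊗[F] H) :
    (A ⊗[F] H) ⊗[F] (A ⊗[F] H) →ₗ[F] A ⊗[F] H :=
  TensorProduct.map QA.mu QH.mu ∘ₗ (TensorProduct.assoc F A A (H ⊗[F] H)).symm.toLinearMap
    ∘ₗ lTensor A ((TensorProduct.assoc F A H H).toLinearMap ∘ₗ rTensor H Ψ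
        ∘ₗ (TensorProduct.assoc F H A H).symm.toLinearMap)
    ∘ₗ (TensorProduct.assoc F A H (A ⊗[F] H)).toLinearMap

/-- The wreath product antipode `Ψ∘(λ_H⊗λ_A)∘c_{A,H}`. -/
def wreathLam (QA : HopfQG F A) (QH : HopfQG F H) (Ψ : H ⊗[F] A →ₗ[F] A ⊗[F] H) :
    A ⊗[F] H →ₗ[F] A ⊗[F] H :=
  Ψ ∘ₗ TensorProduct.map QH.lam QA.lam ∘ₗ (TensorProduct.comm F A H).toLinearMap

/-- `f` is a morphism of Hopf quasigroups. -/
def IsHopfQGMor (Q1 : HopfQG F H) (Q2 : HopfQG F X) (f : H →ₗ[F] X) : Prop :=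
  f ∘ₗ Q1.eta = Q2.eta
  ∧ f ∘ₗ Q1.mu = Q2.mu ∘ₗ TensorProduct.map f f
  ∧ Q2.eps ∘ₗ f = Q1.eps
  ∧ TensorProduct.map f f ∘ₗ Q1.delta = Q2.delta ∘ₗ f

/-- `ω_X = μ_X∘(i_A⊗i_H)`. -/
def omegaMap (QX : HopfQG F X) (iA : A →ₗ[F] X) (iH : H →ₗ[F] X) : A ⊗[F] H →ₗ[F] X :=
  QX.mu ∘ₗ TensorProduct.map iA iH

/-- `θ_X = μ_X∘(i_H⊗i_A)`. -/
def thetaMap (QX : HopfQG F X) (iH : H →ₗ[F] X) (iA : A →ₗ[F] X) : H ⊗[F] A →ₗ[F] X :=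
  QX.mu ∘ₗ TensorProduct.map iH iA

/-- `X` factorizes as `X = AH`. -/
def Factorizes (QX : HopfQG F X) (QH : HopfQG F H) (QA : HopfQG F A)
    (iH : H →ₗ[F] X) (iA : A →ₗ[F] X) : Prop :=
  Function.Bijective (omegaMap F QX iA iH)
  ∧ (QX.mu ∘ₗ rTensor X (omegaMap F QX iA iH)
      = QX.mu ∘ₗ TensorProduct.map iA (QX.mu ∘ₗ rTensor X iH)
          ∘ₗ (TensorProduct.assoc F A H X).toLinearMap)
  ∧ (QX.mu ∘ₗ lTensor X (omegaMap F QX iA iH)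
      = QX.mu ∘ₗ TensorProduct.map (QX.mu ∘ₗ lTensor X iA) iH
          ∘ₗ (TensorProduct.assoc F X A H).symm.toLinearMap)
  ∧ (QX.mu ∘ₗ rTensor X (thetaMap F QX iH iA ∘ₗ TensorProduct.map QH.lam QA.lam)
      = QX.mu ∘ₗ TensorProduct.map (iH ∘ₗ QH.lam) (QX.mu ∘ₗ rTensor X (iA ∘ₗ QA.lam))
          ∘ₗ (TensorProduct.assoc F H A X).toLinearMap)
  ∧ (QX.mu ∘ₗ lTensor X (thetaMap F QX iH iA ∘ₗ TensorProduct.map QH.lam QA.lam)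
      = QX.mu ∘ₗ TensorProduct.map (QX.mu ∘ₗ lTensor X (iH ∘ₗ QH.lam)) (iA ∘ₗ QA.lam)
          ∘ₗ (TensorProduct.assoc F X H A).symm.toLinearMap)

end QGDefs

/-- A Hopf coquasigroup structure on an `F`-module `D`. -/
structure HopfCoQG (F : Type u) [Field F] (D : Type u) [AddCommGroup D] [Module F D] where
  eta : F →ₗ[F] D
  mu : D ⊗[F] D →ₗ[F] D
  eps : D →ₗ[F] F
  delta : D →ₗ[F] D ⊗[F] D
  lam : D →ₗ[F] D
  mul_one : mu ∘ₗ lTensor D eta ∘ₗ (TensorProduct.rid F D).symm.toLinearMap = LinearMap.id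
  one_mul : mu ∘ₗ rTensor D eta ∘ₗ (TensorProduct.lid F D).symm.toLinearMap = LinearMap.id
  mul_assoc : mu ∘ₗ rTensor D mu
      = mu ∘ₗ lTensor D mu ∘ₗ (TensorProduct.assoc F D D D).toLinearMap
  counit_left : (TensorProduct.lid F D).toLinearMap ∘ₗ rTensor D eps ∘ₗ delta = LinearMap.id
  counit_right : (TensorProduct.rid F D).toLinearMap ∘ₗ lTensor D eps ∘ₗ delta = LinearMap.id
  eps_eta : eps ∘ₗ eta = LinearMap.id
  eps_mu : eps ∘ₗ mu = (TensorProduct.lid F F).toLinearMap ∘ₗ TensorProduct.map eps eps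
  delta_eta : delta ∘ₗ eta
      = TensorProduct.map eta eta ∘ₗ (TensorProduct.lid F F).symm.toLinearMap
  delta_mu : delta ∘ₗ mu
      = TensorProduct.map mu mu ∘ₗ (TensorProduct.tensorTensorTensorComm F D D D D).toLinearMap
          ∘ₗ TensorProduct.map delta delta
  antipode_l1 : lTensor D mu ∘ₗ (TensorProduct.assoc F D D D).toLinearMap
        ∘ₗ TensorProduct.map delta lam ∘ₗ delta
      = lTensor D eta ∘ₗ (TensorProduct.rid F D).symm.toLinearMap
  antipode_l2 : lTensor D mu ∘ₗ lTensor D (rTensor D lam)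
        ∘ₗ (TensorProduct.assoc F D D D).toLinearMap ∘ₗ rTensor D delta ∘ₗ delta
      = lTensor D eta ∘ₗ (TensorProduct.rid F D).symm.toLinearMap
  antipode_r1 : rTensor D mu ∘ₗ (TensorProduct.assoc F D D D).symm.toLinearMap
        ∘ₗ TensorProduct.map lam delta ∘ₗ delta
      = rTensor D eta ∘ₗ (TensorProduct.lid F D).symm.toLinearMap
  antipode_r2 : rTensor D mu ∘ₗ (TensorProduct.assoc F D D D).symm.toLinearMap
        ∘ₗ lTensor D (rTensor D lam) ∘ₗ lTensor D delta ∘ₗ delta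
      = rTensor D eta ∘ₗ (TensorProduct.lid F D).symm.toLinearMap

section CoQGDefs

variable (F : Type u) [Field F]
variable {D : Type u} [AddCommGroup D] [Module F D]
variable {B : Type u} [AddCommGroup B] [Module F B]
variable {Y : Type u} [AddCommGroup Y] [Module F Y]

/-- `Ω : D⊗B → B⊗D` is a codistributive law of the Hopf coquasigroup `D` over `B`. -/
def IsCoDistLaw (QD : HopfCoQG F D) (QB : HopfCoQG F B) (Ω : D ⊗[F] B →ₗ[F] B ⊗[F] D) : Prop :=
  (lTensor B (TensorProduct.map QB.lam QD.lam) ∘ₗ (TensorProduct.assoc F B B D).toLinearMap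
      ∘ₗ rTensor D QB.delta ∘ₗ Ω
    = lTensor B (TensorProduct.map QB.lam QD.lam) ∘ₗ lTensor B Ω
        ∘ₗ (TensorProduct.assoc F B D B).toLinearMap ∘ₗ rTensor B Ω
        ∘ₗ (TensorProduct.assoc F D B B).symm.toLinearMap ∘ₗ lTensor D QB.delta)
  ∧ (rTensor D (TensorProduct.map QB.lam QD.lam) ∘ₗ (TensorProduct.assoc F B D D).symm.toLinearMap
      ∘ₗ lTensor B QD.delta ∘ₗ Ω
    = rTensor D (TensorProduct.map QB.lam QD.lam) ∘ₗ rTensor D Ω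
        ∘ₗ (TensorProduct.assoc F D B D).symm.toLinearMap ∘ₗ lTensor D Ω
        ∘ₗ (TensorProduct.assoc F D D B).toLinearMap ∘ₗ rTensor B QD.delta)
  ∧ ((TensorProduct.lid F D).toLinearMap ∘ₗ rTensor D QB.eps ∘ₗ Ω
      = (TensorProduct.rid F D).toLinearMap ∘ₗ lTensor D QB.eps)
  ∧ ((TensorProduct.rid F B).toLinearMap ∘ₗ lTensor B QD.eps ∘ₗ Ω
      = (TensorProduct.lid F B).toLinearMap ∘ₗ rTensor B QD.eps)

/-- `Ω` is a monoidal codistributive law of `D` over `B`. -/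
def IsMonoidalCoDL (QD : HopfCoQG F D) (QB : HopfCoQG F B) (Ω : D ⊗[F] B →ₗ[F] B ⊗[F] D) :
    Prop :=
  IsCoDistLaw F QD QB Ω
  ∧ (Ω ∘ₗ tensorMu F QD.mu QB.mu = tensorMu F QB.mu QD.mu ∘ₗ TensorProduct.map Ω Ω)
  ∧ (Ω ∘ₗ tensorEta F QD.eta QB.eta = tensorEta F QB.eta QD.eta)

/-- `Ω` is an a-monoidal codistributive law of `D` over `B`. -/
def IsAMonoidalCoDL (QD : HopfCoQG F D) (QB : HopfCoQG F B) (Ω : D ⊗[F] B →ₗ[F] B ⊗[F] D) :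
    Prop :=
  IsMonoidalCoDL F QD QB Ω
  ∧ (lTensor D (lTensor B (QD.mu ∘ₗ lTensor D QD.lam))
        ∘ₗ lTensor D (TensorProduct.assoc F B D D).toLinearMap
        ∘ₗ lTensor D (rTensor D Ω)
        ∘ₗ lTensor D (TensorProduct.assoc F D B D).symm.toLinearMap
        ∘ₗ (TensorProduct.assoc F D D (B ⊗[F] D)).toLinearMap
        ∘ₗ TensorProduct.map QD.delta Ω
        ∘ₗ (TensorProduct.assoc F D D B).toLinearMap
        ∘ₗ rTensor B QD.delta
      = lTensor D (lTensor B QD.eta ∘ₗ (TensorProduct.rid F B).symm.toLinearMap))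
  ∧ (lTensor D (lTensor B (QD.mu ∘ₗ rTensor D QD.lam))
        ∘ₗ lTensor D (TensorProduct.assoc F B D D).toLinearMap
        ∘ₗ lTensor D (rTensor D Ω)
        ∘ₗ lTensor D (TensorProduct.assoc F D B D).symm.toLinearMap
        ∘ₗ (TensorProduct.assoc F D D (B ⊗[F] D)).toLinearMap
        ∘ₗ TensorProduct.map QD.delta Ω
        ∘ₗ (TensorProduct.assoc F D D B).toLinearMap
        ∘ₗ rTensor B QD.delta
      = lTensor D (lTensor B QD.eta ∘ₗ (TensorProduct.rid F B).symm.toLinearMap))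
  ∧ (rTensor (D ⊗[F] B) (QB.mu ∘ₗ lTensor B QB.lam)
        ∘ₗ (TensorProduct.assoc F B B (D ⊗[F] B)).symm.toLinearMap
        ∘ₗ lTensor B (TensorProduct.assoc F B D B).toLinearMap
        ∘ₗ lTensor B (rTensor B Ω)
        ∘ₗ lTensor B (TensorProduct.assoc F D B B).symm.toLinearMap
        ∘ₗ (TensorProduct.assoc F B D (B ⊗[F] B)).toLinearMap
        ∘ₗ TensorProduct.map Ω QB.delta
        ∘ₗ (TensorProduct.assoc F D B B).symm.toLinearMap
        ∘ₗ lTensor D QB.delta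
      = rTensor (D ⊗[F] B) QB.eta ∘ₗ (TensorProduct.lid F (D ⊗[F] B)).symm.toLinearMap)
  ∧ (rTensor (D ⊗[F] B) (QB.mu ∘ₗ rTensor B QB.lam)
        ∘ₗ (TensorProduct.assoc F B B (D ⊗[F] B)).symm.toLinearMap
        ∘ₗ lTensor B (TensorProduct.assoc F B D B).toLinearMap
        ∘ₗ lTensor B (rTensor B Ω)
        ∘ₗ lTensor B (TensorProduct.assoc F D B B).symm.toLinearMap
        ∘ₗ (TensorProduct.assoc F B D (B ⊗[F] B)).toLinearMap
        ∘ₗ TensorProduct.map Ω QB.delta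
        ∘ₗ (TensorProduct.assoc F D B B).symm.toLinearMap
        ∘ₗ lTensor D QB.delta
      = rTensor (D ⊗[F] B) QB.eta ∘ₗ (TensorProduct.lid F (D ⊗[F] B)).symm.toLinearMap)

/-- The wreath coproduct `(D⊗Ω⊗B)∘(δ_D⊗δ_B)` on `D⊗B`. -/
def wreathDelta (QD : HopfCoQG F D) (QB : HopfCoQG F B) (Ω : D ⊗[F] B →ₗ[F] B ⊗[F] D) :
    D ⊗[F] B →ₗ[F] (D ⊗[F] B) ⊗[F] (D ⊗[F] B) :=
  (TensorProduct.assoc F D B (D ⊗[F] B)).symm.toLinearMap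
    ∘ₗ lTensor D ((TensorProduct.assoc F B D B).toLinearMap ∘ₗ rTensor B Ω
        ∘ₗ (TensorProduct.assoc F D B B).symm.toLinearMap)
    ∘ₗ (TensorProduct.assoc F D D (B ⊗[F] B)).toLinearMap
    ∘ₗ TensorProduct.map QD.delta QB.delta

/-- The wreath coproduct antipode `c_{B,D}∘(λ_B⊗λ_D)∘Ω`. -/
def wreathCoLam (QD : HopfCoQG F D) (QB : HopfCoQG F B) (Ω : D ⊗[F] B →ₗ[F] B ⊗[F] D) :
    D ⊗[F] B →ₗ[F] D ⊗[F] B :=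
  (TensorProduct.comm F B D).toLinearMap ∘ₗ TensorProduct.map QB.lam QD.lam ∘ₗ Ω

/-- `f` is a morphism of Hopf coquasigroups. -/
def IsHopfCoQGMor (Q1 : HopfCoQG F D) (Q2 : HopfCoQG F B) (f : D →ₗ[F] B) : Prop :=
  f ∘ₗ Q1.eta = Q2.eta
  ∧ f ∘ₗ Q1.mu = Q2.mu ∘ₗ TensorProduct.map f f
  ∧ Q2.eps ∘ₗ f = Q1.eps
  ∧ TensorProduct.map f f ∘ₗ Q1.delta = Q2.delta ∘ₗ f

/-- `u_Y = (p_D⊗p_B)∘δ_Y`. -/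
def uMap (QY : HopfCoQG F Y) (pD : Y →ₗ[F] D) (pB : Y →ₗ[F] B) : Y →ₗ[F] D ⊗[F] B :=
  TensorProduct.map pD pB ∘ₗ QY.delta

/-- `v_Y = (p_B⊗p_D)∘δ_Y`. -/
def vMap (QY : HopfCoQG F Y) (pB : Y →ₗ[F] B) (pD : Y →ₗ[F] D) : Y →ₗ[F] B ⊗[F] D :=
  TensorProduct.map pB pD ∘ₗ QY.delta

/-- `Y` cofactorizes as `Y = D•B`. -/
def Cofactorizes (QY : HopfCoQG F Y) (QD : HopfCoQG F D) (QB : HopfCoQG F B)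
    (pD : Y →ₗ[F] D) (pB : Y →ₗ[F] B) : Prop :=
  Function.Bijective (uMap F QY pD pB)
  ∧ (lTensor Y (uMap F QY pD pB) ∘ₗ QY.delta
      = (TensorProduct.assoc F Y D B).toLinearMap
          ∘ₗ TensorProduct.map (lTensor Y pD ∘ₗ QY.delta) pB ∘ₗ QY.delta)
  ∧ (rTensor Y (uMap F QY pD pB) ∘ₗ QY.delta
      = (TensorProduct.assoc F D B Y).symm.toLinearMap
          ∘ₗ TensorProduct.map pD (rTensor Y pB ∘ₗ QY.delta) ∘ₗ QY.delta)
  ∧ (lTensor Y (TensorProduct.map QB.lam QD.lam ∘ₗ vMap F QY pB pD) ∘ₗ QY.delta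
      = (TensorProduct.assoc F Y B D).toLinearMap
          ∘ₗ TensorProduct.map (lTensor Y (QB.lam ∘ₗ pB) ∘ₗ QY.delta) (QD.lam ∘ₗ pD)
          ∘ₗ QY.delta)
  ∧ (rTensor Y (TensorProduct.map QB.lam QD.lam ∘ₗ vMap F QY pB pD) ∘ₗ QY.delta
      = (TensorProduct.assoc F B D Y).symm.toLinearMap
          ∘ₗ TensorProduct.map (QB.lam ∘ₗ pB) (rTensor Y (QD.lam ∘ₗ pD) ∘ₗ QY.delta)
          ∘ₗ QY.delta)

end CoQGDefs

section MyAux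

variable {F : Type u} [Field F]
variable {M M' N N' P P' Q' : Type u}
variable [AddCommGroup M] [Module F M] [AddCommGroup M'] [Module F M']
variable [AddCommGroup N] [Module F N] [AddCommGroup N'] [Module F N']
variable [AddCommGroup P] [Module F P] [AddCommGroup P'] [Module F P']
variable [AddCommGroup Q'] [Module F Q']

private lemma myext_triple' {g h : M ⊗[F] (N ⊗[F] P) →ₗ[F] Q'}
    (H : ∀ x y z, g (x ⊗ₜ (y ⊗ₜ z)) = h (x ⊗ₜ (y ⊗ₜ z))) : g = h := by
  apply TensorProduct.ext'
  intro x t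
  induction t using TensorProduct.induction_on with
  | zero => simp [TensorProduct.tmul_zero]
  | tmul y z => exact H x y z
  | add a b ha hb => simp [TensorProduct.tmul_add, ha, hb]

private lemma my_assoc_nat_fst (f : M →ₗ[F] M') :
    rTensor (N ⊗[F] P) f ∘ₗ (TensorProduct.assoc F M N P).toLinearMap
      = (TensorProduct.assoc F M' N P).toLinearMap ∘ₗ rTensor P (rTensor N f) :=
  TensorProduct.ext_threefold fun _ _ _ => by simp

private lemma my_assoc_nat_thd (f : P →ₗ[F] P') :
    lTensor M (lTensor N f) ∘ₗ (TensorProduct.assoc F M N P).toLinearMap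
      = (TensorProduct.assoc F M N P').toLinearMap ∘ₗ lTensor (M ⊗[F] N) f :=
  TensorProduct.ext_threefold fun _ _ _ => by simp

private lemma my_assoc_symm_nat_thd (f : P →ₗ[F] P') :
    lTensor (M ⊗[F] N) f ∘ₗ (TensorProduct.assoc F M N P).symm.toLinearMap
      = (TensorProduct.assoc F M N P').symm.toLinearMap ∘ₗ lTensor M (lTensor N f) :=
  myext_triple' fun _ _ _ => by simp

private lemma my_ttc_nat {Y D B : Type u} [AddCommGroup Y] [Module F Y]
    [AddCommGroup D] [Module F D] [AddCommGroup B] [Module F B]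
    (pD : Y →ₗ[F] D) (pB : Y →ₗ[F] B) :
    (TensorProduct.tensorTensorTensorComm F D B D B).toLinearMap ∘ₗ
        TensorProduct.map (TensorProduct.map pD pB) (TensorProduct.map pD pB)
      = TensorProduct.map (TensorProduct.map pD pD) (TensorProduct.map pB pB) ∘ₗ
        (TensorProduct.tensorTensorTensorComm F Y Y Y Y).toLinearMap :=
  TensorProduct.ext_fourfold' fun _ _ _ _ => by simp

private lemma my_eps_eps {Y : Type u} [AddCommGroup Y] [Module F Y] (QY : HopfCoQG F Y) :
    (TensorProduct.lid F F).toLinearMap ∘ₗ TensorProduct.map QY.eps QY.eps ∘ₗ QY.delta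
      = QY.eps := by
  have h1 : (TensorProduct.lid F F).toLinearMap ∘ₗ TensorProduct.map QY.eps QY.eps
      = QY.eps ∘ₗ (TensorProduct.lid F Y).toLinearMap ∘ₗ rTensor Y QY.eps := by
    apply TensorProduct.ext'
    intro a b
    simp [smul_eq_mul]
  rw [← LinearMap.comp_assoc, h1]
  simp only [LinearMap.comp_assoc]
  rw [QY.counit_left, LinearMap.comp_id]

/-- Rewriting helper: apply a composition identity under a common tail. -/
private lemma cct {A B C T : Type u}
    [AddCommGroup A] [Module F A] [AddCommGroup B] [Module F B]
    [AddCommGroup C] [Module F C] [AddCommGroup T] [Module F T]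
    {f : B →ₗ[F] C} {g : A →ₗ[F] B} {k : A →ₗ[F] C} (h : f ∘ₗ g = k)
    (t : T →ₗ[F] A) : f ∘ₗ (g ∘ₗ t) = k ∘ₗ t := by
  rw [← LinearMap.comp_assoc, h]

end MyAux

/-- `u_Y` is an isomorphism of Hopf coquasigroups from `Y` to the wreath
coproduct `D ⊗_Ω B` (with `Ω = v_Y∘u_Y⁻¹`). -/
theorem stmt12_u_is_isomorphism_to_wreath_coproduct
    {F : Type u} [Field F] {Y D B : Type u}
    [AddCommGroup Y] [Module F Y] [AddCommGroup D] [Module F D] [AddCommGroup B] [Module F B]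
    (QY : HopfCoQG F Y) (QD : HopfCoQG F D) (QB : HopfCoQG F B)
    (hlamD : Function.Bijective QD.lam) (hlamB : Function.Bijective QB.lam)
    (pD : Y →ₗ[F] D) (pB : Y →ₗ[F] B)
    (hpD : Function.Surjective pD) (hpB : Function.Surjective pB)
    (hmD : IsHopfCoQGMor F QY QD pD) (hmB : IsHopfCoQGMor F QY QB pB)
    (hcof : Cofactorizes F QY QD QB pD pB) :
    ∀ Ω : D ⊗[F] B →ₗ[F] B ⊗[F] D,
      Ω = vMap F QY pB pD ∘ₗ (LinearEquiv.ofBijective (uMap F QY pD pB) hcof.1).symm.toLinearMap →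
      Function.Bijective (uMap F QY pD pB)
      ∧ uMap F QY pD pB ∘ₗ QY.eta = tensorEta F QD.eta QB.eta
      ∧ uMap F QY pD pB ∘ₗ QY.mu = tensorMu F QD.mu QB.mu ∘ₗ TensorProduct.map (uMap F QY pD pB) (uMap F QY pD pB)
      ∧ tensorEps F QD.eps QB.eps ∘ₗ uMap F QY pD pB = QY.eps
      ∧ TensorProduct.map (uMap F QY pD pB) (uMap F QY pD pB) ∘ₗ QY.delta = wreathDelta F QD QB Ω ∘ₗ uMap F QY pD pB := by
  intro Ω hΩ
  obtain ⟨hDη, hDμ, hDε, hDδ⟩ := hmD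
  obtain ⟨hBη, hBμ, hBε, hBδ⟩ := hmB
  have hstar := hcof.2.1
  have hstar2 := hcof.2.2.1
  -- `Ω ∘ u = v`
  have huv : Ω ∘ₗ uMap F QY pD pB = vMap F QY pB pD := by
    rw [hΩ, LinearMap.comp_assoc]
    have hid : (LinearEquiv.ofBijective (uMap F QY pD pB) hcof.1).symm.toLinearMap ∘ₗ
        uMap F QY pD pB = LinearMap.id := by
      ext y
      exact (LinearEquiv.ofBijective (uMap F QY pD pB) hcof.1).symm_apply_apply y
    rw [hid, LinearMap.comp_id]
  have huv' : TensorProduct.map pB pD ∘ₗ QY.delta = Ω ∘ₗ uMap F QY pD pB := huv.symm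
  refine ⟨hcof.1, ?_, ?_, ?_, ?_⟩
  · -- unit
    show (TensorProduct.map pD pB ∘ₗ QY.delta) ∘ₗ QY.eta = _
    rw [LinearMap.comp_assoc, QY.delta_eta, ← LinearMap.comp_assoc,
      ← TensorProduct.map_comp, hDη, hBη]
    rfl
  · -- multiplication
    show (TensorProduct.map pD pB ∘ₗ QY.delta) ∘ₗ QY.mu = _
    have hm1 : TensorProduct.map pD pB ∘ₗ TensorProduct.map QY.mu QY.mu
        = TensorProduct.map QD.mu QB.mu ∘ₗ
            TensorProduct.map (TensorProduct.map pD pD) (TensorProduct.map pB pB) := by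
      rw [← TensorProduct.map_comp, hDμ, hBμ, TensorProduct.map_comp]
    simp only [LinearMap.comp_assoc]
    rw [QY.delta_mu]
    rw [cct hm1]
    simp only [LinearMap.comp_assoc]
    rw [cct (my_ttc_nat pD pB).symm]
    simp only [LinearMap.comp_assoc]
    rw [(TensorProduct.map_comp (TensorProduct.map pD pB) (TensorProduct.map pD pB)
      QY.delta QY.delta).symm]
    rfl
  · -- counit
    show tensorEps F QD.eps QB.eps ∘ₗ (TensorProduct.map pD pB ∘ₗ QY.delta) = QY.eps
    have h1 : tensorEps F QD.eps QB.eps ∘ₗ TensorProduct.map pD pB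
        = (TensorProduct.lid F F).toLinearMap ∘ₗ TensorProduct.map QY.eps QY.eps := by
      unfold tensorEps
      rw [LinearMap.comp_assoc, ← TensorProduct.map_comp, hDε, hBε]
    rw [← LinearMap.comp_assoc, h1, LinearMap.comp_assoc, my_eps_eps]
  · -- coproduct
    have hC : TensorProduct.map (uMap F QY pD pB) pB ∘ₗ QY.delta
        = (TensorProduct.assoc F D B B).symm.toLinearMap
            ∘ₗ (TensorProduct.map pD (TensorProduct.map pB pB ∘ₗ QY.delta) ∘ₗ QY.delta) := by
      rw [← cct (lTensor_comp_rTensor (f := uMap F QY pD pB) (g := pB))]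
      rw [hstar2]
      rw [cct (my_assoc_symm_nat_thd pB)]
      simp only [LinearMap.comp_assoc]
      rw [cct (lTensor_comp_map (g' := lTensor B pB) (f := pD) (g := rTensor Y pB ∘ₗ QY.delta))]
      rw [cct (lTensor_comp_rTensor (f := pB) (g := pB))]
    have hB1 : TensorProduct.map pD (uMap F QY pD pB) ∘ₗ QY.delta
        = (TensorProduct.assoc F D D B).toLinearMap
            ∘ₗ (TensorProduct.map (TensorProduct.map pD pD ∘ₗ QY.delta) pB ∘ₗ QY.delta) := by
      rw [← cct (rTensor_comp_lTensor (f := pD) (g := uMap F QY pD pB))]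
      rw [hstar]
      rw [cct (my_assoc_nat_fst pD)]
      simp only [LinearMap.comp_assoc]
      rw [cct (rTensor_comp_map (f' := rTensor D pD) (f := lTensor Y pD ∘ₗ QY.delta) (g := pB))]
      rw [cct (rTensor_comp_lTensor (f := pD) (g := pD))]
    have hB2 : TensorProduct.map pB (uMap F QY pD pB) ∘ₗ QY.delta
        = (TensorProduct.assoc F B D B).toLinearMap
            ∘ₗ (TensorProduct.map (TensorProduct.map pB pD ∘ₗ QY.delta) pB ∘ₗ QY.delta) := by
      rw [← cct (rTensor_comp_lTensor (f := pB) (g := uMap F QY pD pB))]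
      rw [hstar]
      rw [cct (my_assoc_nat_fst pB)]
      simp only [LinearMap.comp_assoc]
      rw [cct (rTensor_comp_map (f' := rTensor D pB) (f := lTensor Y pD ∘ₗ QY.delta) (g := pB))]
      rw [cct (rTensor_comp_lTensor (f := pB) (g := pD))]
    have hdag : (TensorProduct.assoc F D D (B ⊗[F] B)).toLinearMap
          ∘ₗ (TensorProduct.map (TensorProduct.map pD pD ∘ₗ QY.delta)
                (TensorProduct.map pB pB ∘ₗ QY.delta) ∘ₗ QY.delta)
        = TensorProduct.map pD
            (TensorProduct.map pD (TensorProduct.map pB pB ∘ₗ QY.delta) ∘ₗ QY.delta)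
            ∘ₗ QY.delta := by
      have h1 := congrArg (fun t => lTensor D (lTensor D QB.delta) ∘ₗ t) hB1
      have e1 : lTensor D (lTensor D QB.delta) ∘ₗ (TensorProduct.map pD (uMap F QY pD pB) ∘ₗ QY.delta)
          = TensorProduct.map pD (lTensor D QB.delta ∘ₗ uMap F QY pD pB) ∘ₗ QY.delta :=
        by rw [← LinearMap.comp_assoc, lTensor_comp_map]
      rw [e1] at h1
      rw [show uMap F QY pD pB = TensorProduct.map pD pB ∘ₗ QY.delta from rfl] at h1
      have e1b : lTensor D QB.delta ∘ₗ (TensorProduct.map pD pB ∘ₗ QY.delta)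
          = TensorProduct.map pD (QB.delta ∘ₗ pB) ∘ₗ QY.delta := by
        rw [← LinearMap.comp_assoc, lTensor_comp_map]
      rw [e1b] at h1
      have e1c : lTensor D (lTensor D QB.delta) ∘ₗ ((TensorProduct.assoc F D D B).toLinearMap
            ∘ₗ (TensorProduct.map (TensorProduct.map pD pD ∘ₗ QY.delta) pB ∘ₗ QY.delta))
          = (TensorProduct.assoc F D D (B ⊗[F] B)).toLinearMap
            ∘ₗ (lTensor (D ⊗[F] D) QB.delta
            ∘ₗ (TensorProduct.map (TensorProduct.map pD pD ∘ₗ QY.delta) pB ∘ₗ QY.delta)) := by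
        rw [← LinearMap.comp_assoc, my_assoc_nat_thd, LinearMap.comp_assoc]
      rw [e1c] at h1
      have e1d : lTensor (D ⊗[F] D) QB.delta
            ∘ₗ (TensorProduct.map (TensorProduct.map pD pD ∘ₗ QY.delta) pB ∘ₗ QY.delta)
          = TensorProduct.map (TensorProduct.map pD pD ∘ₗ QY.delta) (QB.delta ∘ₗ pB)
              ∘ₗ QY.delta := by
        rw [← LinearMap.comp_assoc, lTensor_comp_map]
      rw [e1d] at h1
      rw [← hBδ] at h1
      exact h1.symm
    have hL : TensorProduct.map (uMap F QY pD pB) (uMap F QY pD pB) ∘ₗ QY.delta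
        = (TensorProduct.assoc F D B (D ⊗[F] B)).symm.toLinearMap
            ∘ₗ (TensorProduct.map pD
                  ((TensorProduct.assoc F B D B).toLinearMap
                    ∘ₗ (rTensor B Ω
                    ∘ₗ ((TensorProduct.assoc F D B B).symm.toLinearMap
                    ∘ₗ (TensorProduct.map pD (TensorProduct.map pB pB ∘ₗ QY.delta)
                          ∘ₗ QY.delta))))
                ∘ₗ QY.delta) := by
      rw [← cct (lTensor_comp_rTensor (f := uMap F QY pD pB) (g := uMap F QY pD pB))]
      rw [hstar2]
      rw [cct (my_assoc_symm_nat_thd (uMap F QY pD pB))]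
      simp only [LinearMap.comp_assoc]
      have e2 : lTensor D (lTensor B (uMap F QY pD pB)) ∘ₗ
            (TensorProduct.map pD (rTensor Y pB ∘ₗ QY.delta) ∘ₗ QY.delta)
          = TensorProduct.map pD (lTensor B (uMap F QY pD pB) ∘ₗ rTensor Y pB ∘ₗ QY.delta)
              ∘ₗ QY.delta :=
        by rw [← LinearMap.comp_assoc, lTensor_comp_map]
      rw [e2]
      rw [cct (lTensor_comp_rTensor (f := pB) (g := uMap F QY pD pB))]
      rw [hB2, huv']
      rw [← cct (rTensor_comp_map (f' := Ω) (f := uMap F QY pD pB) (g := pB))]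
      rw [hC]
    have hR : wreathDelta F QD QB Ω ∘ₗ uMap F QY pD pB
        = (TensorProduct.assoc F D B (D ⊗[F] B)).symm.toLinearMap
            ∘ₗ (TensorProduct.map pD
                  ((TensorProduct.assoc F B D B).toLinearMap
                    ∘ₗ (rTensor B Ω
                    ∘ₗ ((TensorProduct.assoc F D B B).symm.toLinearMap
                    ∘ₗ (TensorProduct.map pD (TensorProduct.map pB pB ∘ₗ QY.delta)
                          ∘ₗ QY.delta))))
                ∘ₗ QY.delta) := by
      show ((TensorProduct.assoc F D B (D ⊗[F] B)).symm.toLinearMap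
          ∘ₗ lTensor D ((TensorProduct.assoc F B D B).toLinearMap ∘ₗ rTensor B Ω
              ∘ₗ (TensorProduct.assoc F D B B).symm.toLinearMap)
          ∘ₗ (TensorProduct.assoc F D D (B ⊗[F] B)).toLinearMap
          ∘ₗ TensorProduct.map QD.delta QB.delta)
          ∘ₗ (TensorProduct.map pD pB ∘ₗ QY.delta) = _
      have hm2 : TensorProduct.map QD.delta QB.delta ∘ₗ TensorProduct.map pD pB
          = TensorProduct.map (TensorProduct.map pD pD ∘ₗ QY.delta)
              (TensorProduct.map pB pB ∘ₗ QY.delta) := by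
        rw [← TensorProduct.map_comp, ← hDδ, ← hBδ]
      simp only [LinearMap.comp_assoc]
      rw [cct hm2, hdag]
      have e3 : lTensor D ((TensorProduct.assoc F B D B).toLinearMap ∘ₗ rTensor B Ω
            ∘ₗ (TensorProduct.assoc F D B B).symm.toLinearMap) ∘ₗ
            (TensorProduct.map pD
              (TensorProduct.map pD (TensorProduct.map pB pB ∘ₗ QY.delta) ∘ₗ QY.delta)
              ∘ₗ QY.delta)
          = TensorProduct.map pD
              (((TensorProduct.assoc F B D B).toLinearMap ∘ₗ rTensor B Ω
                ∘ₗ (TensorProduct.assoc F D B B).symm.toLinearMap) ∘ₗ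
                (TensorProduct.map pD (TensorProduct.map pB pB ∘ₗ QY.delta) ∘ₗ QY.delta))
              ∘ₗ QY.delta :=
        by rw [← LinearMap.comp_assoc, lTensor_comp_map]
      rw [e3]
      simp only [LinearMap.comp_assoc]
    exact hL.trans hR.symm
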